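/- Let A be an n×n matrix and B an n×s matrix over ℝ≥0∞, and let A* := ∑' k, A^k. Then X = A*·B is the least solution of the matrix Bellman equation X = A·X + B: it satisfies A·(A*·B) + B = A*·B, and for every n×s matrix Y with Y = A·Y + B one has A*·B ≤ Y entrywise. -/

import Mathlib

open scoped ENNReal

/-- For an `n × n` matrix `A` and an `n × s` matrix `B` over `ℝ≥0∞`,
`X = A* * B` (with `A* = ∑' k, A ^ k`) is the least solution, in the
entrywise order, of the matrix Bellman equation `X = A * X + B`. -/
theorem matrix_bellman_least_solution (n s : ℕ)
    (A : Matrix (Fin n) (Fin n) ℝ≥0∞) (B : Matrix (Fin n) (Fin s) ℝ≥0∞) :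
    A * ((∑' k : ℕ, A ^ k) * B) + B = (∑' k : ℕ, A ^ k) * B ∧
    ∀ Y : Matrix (Fin n) (Fin s) ℝ≥0∞, Y = A * Y + B →
      ∀ i j, ((∑' k : ℕ, A ^ k) * B) i j ≤ Y i j := by
  have hsumA : Summable fun k : ℕ => A ^ k :=
    Pi.summable.mpr fun _ => Pi.summable.mpr fun _ => ENNReal.summable
  have happly : ∀ i j, (∑' k : ℕ, A ^ k) i j = ∑' k : ℕ, (A ^ k) i j := by
    intro i j
    exact (congrFun (tsum_apply hsumA) j).trans (tsum_apply (Pi.summable.mpr fun _ => ENNReal.summable))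
  -- entrywise formula for `A* * B`
  have hSB : ∀ i j, ((∑' k : ℕ, A ^ k) * B) i j = ∑' k : ℕ, ((A ^ k) * B) i j := by
    intro i j
    rw [Matrix.mul_apply]
    simp_rw [happly, ← ENNReal.tsum_mul_right]
    rw [← Summable.tsum_finsetSum (fun _ _ => ENNReal.summable)]
    simp [Matrix.mul_apply]
  -- entrywise formula for `A * (A* * B)`
  have hASB : ∀ i j, (A * ((∑' k : ℕ, A ^ k) * B)) i j
      = ∑' k : ℕ, ((A ^ (k + 1)) * B) i j := by
    intro i j
    rw [Matrix.mul_apply]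
    simp_rw [hSB, ← ENNReal.tsum_mul_left]
    rw [← Summable.tsum_finsetSum (fun _ _ => ENNReal.summable)]
    congr 1
    funext k
    rw [pow_succ', Matrix.mul_assoc, Matrix.mul_apply]
  constructor
  · ext i j
    rw [Matrix.add_apply, hASB, hSB,
      tsum_eq_zero_add' (f := fun k : ℕ => ((A ^ k) * B) i j) ENNReal.summable,
      pow_zero, Matrix.one_mul, add_comm]
  · intro Y hY
    -- partial sums are bounded by any solution `Y`
    have key : ∀ N : ℕ, ∀ i j, ((∑ k ∈ Finset.range N, A ^ k) * B) i j ≤ Y i j := by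
      intro N
      induction N with
      | zero => simp
      | succ N ih =>
        intro i j
        have e : (∑ k ∈ Finset.range (N + 1), A ^ k) * B
            = A * ((∑ k ∈ Finset.range N, A ^ k) * B) + B := by
          rw [Finset.sum_range_succ', pow_zero]
          simp_rw [pow_succ']
          rw [← Finset.mul_sum, Matrix.add_mul, Matrix.one_mul, Matrix.mul_assoc]
        rw [e, Matrix.add_apply, Matrix.mul_apply]
        conv_rhs => rw [hY]
        rw [Matrix.add_apply, Matrix.mul_apply]
        gcongr with l _
        exact ih l j
    intro i j
    rw [hSB, ENNReal.tsum_eq_iSup_sum]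
    refine iSup_le fun t => ?_
    calc ∑ k ∈ t, ((A ^ k) * B) i j
        ≤ ∑ k ∈ Finset.range ((t.sup id).succ), ((A ^ k) * B) i j :=
          Finset.sum_le_sum_of_subset t.subset_range_sup_succ
      _ = ((∑ k ∈ Finset.range ((t.sup id).succ), A ^ k) * B) i j := by
          rw [Matrix.sum_mul, Matrix.sum_apply]
      _ ≤ Y i j := key _ i j
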